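/- The equilibrium of the two-level model is a global attractor: if t ↦ (η₁(t), η₂(t)) is a differentiable pair of 2×2 complex matrix-valued functions on [0,∞) satisfying η₁'(t) = 𝒦₁(η₁(t),η₂(t)) and η₂'(t) = 𝒦₂(η₁(t),η₂(t)) for all t ≥ 0, with η₁(0), η₂(0) positive semidefinite and Tr(η₁(0)) + Tr(η₂(0)) = 1, then η₁(t) → p(z₁⁺P₊ + z₁⁻P₋) and η₂(t) → (1−p)(z₂⁺P₊ + z₂⁻P₋) as t → ∞. -/

import Mathlib

open Matrix
open scoped ComplexOrder

attribute [local instance] Matrix.normedAddCommGroup Matrix.normedSpace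

noncomputable section TwoLevel

def σm : Matrix (Fin 2) (Fin 2) ℂ := !![0, 0; 1, 0]
def σp : Matrix (Fin 2) (Fin 2) ℂ := !![0, 1; 0, 0]
def σz : Matrix (Fin 2) (Fin 2) ℂ := !![1, 0; 0, -1]
def Pp : Matrix (Fin 2) (Fin 2) ℂ := !![1, 0; 0, 0]
def Pm : Matrix (Fin 2) (Fin 2) ℂ := !![0, 0; 0, 1]

/-- `𝒦₁` of the two-level model. -/
def K1 (γ₀ γ₁ γ₂ κ ω₁ : ℝ) (η₁ η₂ : Matrix (Fin 2) (Fin 2) ℂ) :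
    Matrix (Fin 2) (Fin 2) ℂ :=
  (γ₀ : ℂ) • (σm * η₁ * σp - (1/2 : ℂ) • (Pp * η₁ + η₁ * Pp))
    + (γ₂ : ℂ) • (σp * η₂ * σm)
    - ((γ₁ : ℂ)/2) • (Pp * η₁ + η₁ * Pp)
    - ((γ₀ : ℂ) * (κ : ℂ)) • η₁
    - (Complex.I * (ω₁ : ℂ) / 2) • (σz * η₁ - η₁ * σz)

/-- `𝒦₂` of the two-level model. -/
def K2 (γ₀ γ₁ γ₂ κ ω₂ : ℝ) (η₁ η₂ : Matrix (Fin 2) (Fin 2) ℂ) :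
    Matrix (Fin 2) (Fin 2) ℂ :=
  (γ₀ : ℂ) • (σm * η₂ * σp - (1/2 : ℂ) • (Pp * η₂ + η₂ * Pp))
    + (γ₁ : ℂ) • (σm * η₁ * σp)
    - ((γ₂ : ℂ)/2) • (Pm * η₂ + η₂ * Pm)
    + ((γ₀ : ℂ) * (κ : ℂ)) • η₁
    - (Complex.I * (ω₂ : ℂ) / 2) • (σz * η₂ - η₂ * σz)

/-- `κ₂ = γ₂κ/(γ₁+γ₀(1+κ))`. -/
def κ₂ (γ₀ γ₁ γ₂ κ : ℝ) : ℝ := γ₂ * κ / (γ₁ + γ₀ * (1 + κ))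

/-- `z₁⁺ = κ₁/(1+κ₁)` with `κ₁ = κ`. -/
def z1p (κ : ℝ) : ℝ := κ / (1 + κ)

/-- `z₂⁺ = κ₂/(1+κ₂)`. -/
def z2p (γ₀ γ₁ γ₂ κ : ℝ) : ℝ := κ₂ γ₀ γ₁ γ₂ κ / (1 + κ₂ γ₀ γ₁ γ₂ κ)

/-- `p = γ₂(1+κ)/(γ₂ + κ(γ₀+γ₁+γ₂) + κ²(γ₀+γ₂))`. -/
def peq (γ₀ γ₁ γ₂ κ : ℝ) : ℝ :=
  γ₂ * (1 + κ) / (γ₂ + κ * (γ₀ + γ₁ + γ₂) + κ ^ 2 * (γ₀ + γ₂))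

/-- `η₁(∞) = p(z₁⁺P₊ + z₁⁻P₋)`. -/
def η1eq (γ₀ γ₁ γ₂ κ : ℝ) : Matrix (Fin 2) (Fin 2) ℂ :=
  (peq γ₀ γ₁ γ₂ κ : ℂ) • ((z1p κ : ℂ) • Pp + ((1 - z1p κ : ℝ) : ℂ) • Pm)

/-- `η₂(∞) = (1−p)(z₂⁺P₊ + z₂⁻P₋)`. -/
def η2eq (γ₀ γ₁ γ₂ κ : ℝ) : Matrix (Fin 2) (Fin 2) ℂ :=
  ((1 - peq γ₀ γ₁ γ₂ κ : ℝ) : ℂ) •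
    ((z2p γ₀ γ₁ γ₂ κ : ℂ) • Pp + ((1 - z2p γ₀ γ₁ γ₂ κ : ℝ) : ℂ) • Pm)

end TwoLevel


section Aux
open Filter Set Polynomial



lemma exp_neg_mul_hasDerivAt (lam : ℂ) (s : ℝ) :
    HasDerivAt (fun r : ℝ => Complex.exp (-(lam * r))) (-lam * Complex.exp (-(lam * s))) s := by
  have h1 : HasDerivAt (fun r : ℝ => -(lam * (r : ℂ))) (-lam) s := by
    have := (Complex.ofRealCLM.hasDerivAt (x := s)).const_mul lam
    simpa [Pi.neg_def] using this.neg
  simpa [mul_comm] using h1.cexp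

lemma decay_lemma (lam : ℂ) (hl : lam.re < 0) (f g : ℝ → ℂ)
    (hf : ∀ t : ℝ, 0 ≤ t → HasDerivAt f (lam * f t + g t) t)
    (hgc : ContinuousOn g (Set.Ici 0))
    (hg : Tendsto g atTop (nhds 0)) :
    Tendsto f atTop (nhds 0) := by
  set x := lam.re with hx
  set h : ℝ → ℂ := fun t => Complex.exp (-(lam * t)) * f t with hh
  have hderiv : ∀ s : ℝ, 0 ≤ s →
      HasDerivAt h (Complex.exp (-(lam * s)) * g s) s := by
    intro s hs
    have := (exp_neg_mul_hasDerivAt lam s).mul (hf s hs)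
    refine this.congr_deriv (Eq.symm ?_)
    ring
  have key : ∀ T t : ℝ, 0 ≤ T → T ≤ t →
      f t = Complex.exp (lam * t) * (h T + ∫ s in T..t, Complex.exp (-(lam * s)) * g s) := by
    intro T t hT hTt
    have hsub : Set.uIcc T t ⊆ Set.Ici 0 := by
      rw [Set.uIcc_of_le hTt]
      exact fun s hs => le_trans hT hs.1
    have hint : IntervalIntegrable (fun s => Complex.exp (-(lam * s)) * g s)
        MeasureTheory.volume T t := by
      apply ContinuousOn.intervalIntegrable
      exact (Complex.continuous_exp.comp (by continuity)).continuousOn.mul (hgc.mono hsub)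
    have hftc := intervalIntegral.integral_eq_sub_of_hasDerivAt
      (fun s hs => hderiv s (hsub hs)) hint
    have hht : h t = h T + ∫ s in T..t, Complex.exp (-(lam * s)) * g s := by
      rw [hftc]; ring
    have heq : Complex.exp (lam * t) * h t = f t := by
      rw [hh]; simp only []
      rw [← mul_assoc, ← Complex.exp_add]
      simp
    rw [← heq, hht]
  rw [NormedAddCommGroup.tendsto_nhds_zero]
  intro ε hε
  have hxneg : 0 < -x := by linarith
  set δ : ℝ := ε * (-x) / 2 with hδ
  have hδpos : 0 < δ := by positivity
  obtain ⟨T₀, hT₀⟩ := (Metric.tendsto_atTop.mp hg δ hδpos)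
  set T := max T₀ 0 with hT
  have hT0 : (0:ℝ) ≤ T := le_max_right _ _
  have hTg : ∀ s, T ≤ s → ‖g s‖ ≤ δ := by
    intro s hs
    have := hT₀ s (le_trans (le_max_left _ _) hs)
    simpa [dist_eq_norm] using this.le
  -- main bound
  have bound : ∀ t, T ≤ t → ‖f t‖ ≤ Real.exp (x*t) * ‖h T‖ + ε/2 := by
    intro t ht
    have h0t : (0:ℝ) ≤ t := le_trans hT0 ht
    rw [key T t hT0 ht]
    have hnexp : ∀ s : ℝ, ‖Complex.exp (lam * s)‖ = Real.exp (x * s) := by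
      intro s
      rw [Complex.norm_exp]
      norm_num [Complex.mul_re, hx]
    have hnexp' : ∀ s : ℝ, ‖Complex.exp (-(lam * s))‖ = Real.exp (-(x * s)) := by
      intro s
      rw [Complex.norm_exp]
      norm_num [Complex.mul_re, hx]
    have hval : (∫ s in T..t, δ * Real.exp (-x*s))
        = δ * ((-x)⁻¹ * (Real.exp (-x*t) - Real.exp (-x*T))) := by
      rw [intervalIntegral.integral_const_mul]
      rw [intervalIntegral.integral_comp_mul_left (fun y => Real.exp y)
        (by linarith : -x ≠ 0), integral_exp]
      simp [smul_eq_mul]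
    have hvalnn : 0 ≤ δ * ((-x)⁻¹ * (Real.exp (-x*t) - Real.exp (-x*T))) := by
      have h1 : Real.exp (-x*T) ≤ Real.exp (-x*t) := Real.exp_le_exp.mpr (by nlinarith)
      have h2 : (0:ℝ) ≤ (-x)⁻¹ := by positivity
      have := sub_nonneg.mpr h1
      positivity
    have hIb : ‖∫ s in T..t, Complex.exp (-(lam * s)) * g s‖
        ≤ δ * ((-x)⁻¹ * (Real.exp (-x*t) - Real.exp (-x*T))) := by
      have hgb : IntervalIntegrable (fun s => δ * Real.exp (-x*s))
          MeasureTheory.volume T t := (Continuous.intervalIntegrable (by continuity) _ _)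
      have hae : ∀ᵐ (s : ℝ) ∂(MeasureTheory.volume.restrict (Set.uIoc T t)),
          ‖Complex.exp (-(lam * s)) * g s‖ ≤ δ * Real.exp (-x*s) := by
        rw [MeasureTheory.ae_restrict_iff' measurableSet_uIoc]
        filter_upwards with s hs
        rw [Set.uIoc_of_le ht] at hs
        have hsT : T ≤ s := hs.1.le
        rw [norm_mul, hnexp']
        have hgs := hTg s hsT
        have hgnn : (0:ℝ) ≤ ‖g s‖ := norm_nonneg _
        have hexp : (0:ℝ) < Real.exp (-(x*s)) := Real.exp_pos _
        have : Real.exp (-(x*s)) * ‖g s‖ ≤ Real.exp (-(x*s)) * δ := by nlinarith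
        calc Real.exp (-(x*s)) * ‖g s‖ ≤ Real.exp (-(x*s)) * δ := this
          _ = δ * Real.exp (-x*s) := by rw [mul_comm, neg_mul]
      have hnle := intervalIntegral.norm_integral_le_abs_of_norm_le hae hgb
      calc ‖∫ s in T..t, Complex.exp (-(lam * s)) * g s‖
          ≤ |∫ s in T..t, δ * Real.exp (-x*s)| := hnle
        _ = δ * ((-x)⁻¹ * (Real.exp (-x*t) - Real.exp (-x*T))) := by
            rw [hval, abs_of_nonneg hvalnn]
    calc ‖Complex.exp (lam * t) * (h T + ∫ s in T..t, Complex.exp (-(lam * s)) * g s)‖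
        = Real.exp (x*t) * ‖h T + ∫ s in T..t, Complex.exp (-(lam * s)) * g s‖ := by
          rw [norm_mul, hnexp]
      _ ≤ Real.exp (x*t) * (‖h T‖ + δ * ((-x)⁻¹ * (Real.exp (-x*t) - Real.exp (-x*T)))) := by
          have := norm_add_le (h T) (∫ s in T..t, Complex.exp (-(lam * s)) * g s)
          have hexp : (0:ℝ) < Real.exp (x*t) := Real.exp_pos _
          nlinarith [le_trans this (by linarith [hIb] : ‖h T‖ + ‖∫ s in T..t, Complex.exp (-(lam * s)) * g s‖ ≤ ‖h T‖ + δ * ((-x)⁻¹ * (Real.exp (-x*t) - Real.exp (-x*T))))]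
      _ ≤ Real.exp (x*t) * ‖h T‖ + ε/2 := by
          have e1 : Real.exp (x*t) * Real.exp (-x*t) = 1 := by
            rw [← Real.exp_add]; ring_nf; exact Real.exp_zero
          have e2 : (0:ℝ) < Real.exp (-x*T) := Real.exp_pos _
          have e3 : (0:ℝ) < Real.exp (x*t) := Real.exp_pos _
          have hδx : δ * (-x)⁻¹ = ε/2 := by
            have hinv : (-x) * (-x)⁻¹ = 1 := mul_inv_cancel₀ (ne_of_gt hxneg)
            rw [hδ]; linear_combination (ε/2) * hinv
          have expand : Real.exp (x*t) * (‖h T‖ + δ * ((-x)⁻¹ * (Real.exp (-x*t) - Real.exp (-x*T))))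
              = Real.exp (x*t) * ‖h T‖ + δ * (-x)⁻¹ * (1 - Real.exp (x*t) * Real.exp (-x*T)) := by
            rw [mul_add]
            rw [show Real.exp (x*t) * (δ * ((-x)⁻¹ * (Real.exp (-x*t) - Real.exp (-x*T)))) = δ * (-x)⁻¹ * (Real.exp (x*t) * Real.exp (-x*t) - Real.exp (x*t) * Real.exp (-x*T)) by ring, e1]
          rw [expand, hδx]
          nlinarith [mul_pos e3 e2]
  -- conclude
  have htend : Tendsto (fun t => Real.exp (x*t) * ‖h T‖) atTop (nhds 0) := by
    have h1 : Tendsto (fun t : ℝ => (-x) * t) atTop atTop :=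
      Tendsto.const_mul_atTop hxneg tendsto_id
    have h2 : Tendsto (fun t : ℝ => x * t) atTop atBot := by
      have := tendsto_neg_atTop_atBot.comp h1
      simpa [Function.comp_def, neg_mul, neg_neg] using this
    have h3 : Tendsto (fun t : ℝ => Real.exp (x*t)) atTop (nhds 0) :=
      Real.tendsto_exp_atBot.comp h2
    simpa using h3.mul_const ‖h T‖
  have hev : ∀ᶠ t in atTop, Real.exp (x*t) * ‖h T‖ < ε/2 :=
    htend.eventually_lt_const (by linarith)
  filter_upwards [eventually_ge_atTop T, hev] with t ht1 ht2
  calc ‖f t‖ ≤ Real.exp (x*t) * ‖h T‖ + ε/2 := bound t ht1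
    _ < ε/2 + ε/2 := by linarith
    _ = ε := by ring



lemma cubic_re_neg (a b c : ℝ) (ha : 0 < a) (hb : 0 < b) (hc : 0 < c) (habc : c < a*b)
    (z : ℂ) (hz : z^3 + (a:ℂ)*z^2 + (b:ℂ)*z + (c:ℂ) = 0) : z.re < 0 := by
  set x := z.re with hxd
  set y := z.im with hyd
  have h1 : x^3 - 3*x*y^2 + a*(x^2 - y^2) + b*x + c = 0 := by
    have := congrArg Complex.re hz
    simp only [Complex.add_re, Complex.mul_re, Complex.ofReal_re, Complex.ofReal_im,
      Complex.zero_re, pow_succ, pow_zero, one_mul, Complex.mul_im] at this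
    linarith [this]
  have h2 : 3*x^2*y - y^3 + 2*a*x*y + b*y = 0 := by
    have := congrArg Complex.im hz
    simp only [Complex.add_im, Complex.mul_re, Complex.ofReal_re, Complex.ofReal_im,
      Complex.zero_im, pow_succ, pow_zero, one_mul, Complex.mul_im] at this
    linarith [this]
  by_cases hy : y = 0
  · have hy2 : y^2 = 0 := by rw [hy]; ring
    have h1' : x^3 + a*x^2 + b*x + c = 0 := by linear_combination h1 + (3*x + a)*hy2
    by_contra hx
    push_neg at hx
    nlinarith [h1', mul_nonneg hx hx, mul_nonneg (mul_nonneg hx hx) hx, mul_nonneg (mul_nonneg hx hx) ha.le]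
  · have h3 : y^2 = 3*x^2 + 2*a*x + b := by
      have hfac : y * (3*x^2 - y^2 + 2*a*x + b) = 0 := by linear_combination h2
      rcases mul_eq_zero.mp hfac with h | h
      · exact absurd h hy
      · linarith
    have key : 8*x^3 + 8*a*x^2 + 2*(a^2+b)*x = c - a*b := by
      linear_combination -h1 - (3*x + a)*h3
    by_contra hx
    push_neg at hx
    nlinarith [key, mul_nonneg hx hx, mul_nonneg (mul_nonneg hx hx) hx,
      mul_nonneg (mul_nonneg hx hx) ha.le, mul_nonneg hx hb.le, mul_nonneg hx (mul_nonneg ha.le ha.le)]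

lemma cubic_roots (a b c : ℝ) :
    ∃ L1 L2 L3 : ℂ,
      (L1 + L2 + L3 = -(a:ℂ)) ∧ (L1*L2 + L1*L3 + L2*L3 = (b:ℂ)) ∧ (L1*L2*L3 = -(c:ℂ)) ∧
      (L1^3 + (a:ℂ)*L1^2 + (b:ℂ)*L1 + (c:ℂ) = 0) ∧
      (L2^3 + (a:ℂ)*L2^2 + (b:ℂ)*L2 + (c:ℂ) = 0) ∧
      (L3^3 + (a:ℂ)*L3^2 + (b:ℂ)*L3 + (c:ℂ) = 0) := by
  have hdeg1 : (X^3 + C (a:ℂ) * X^2 + C (b:ℂ) * X + C (c:ℂ)).degree = 3 := by compute_degree!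
  obtain ⟨L1, hL1⟩ := Complex.exists_root (f := X^3 + C (a:ℂ) * X^2 + C (b:ℂ) * X + C (c:ℂ))
    (by rw [hdeg1]; norm_num)
  have e1 : L1^3 + (a:ℂ)*L1^2 + (b:ℂ)*L1 + (c:ℂ) = 0 := by
    have := hL1
    simp [Polynomial.IsRoot] at this
    linear_combination this
  have hdeg2 : (X^2 + C ((a:ℂ) + L1) * X + C ((b:ℂ) + (a:ℂ)*L1 + L1^2)).degree = 2 := by
    compute_degree!
  obtain ⟨L2, hL2⟩ := Complex.exists_root
    (f := X^2 + C ((a:ℂ) + L1) * X + C ((b:ℂ) + (a:ℂ)*L1 + L1^2))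
    (by rw [hdeg2]; norm_num)
  have e2 : L2^2 + ((a:ℂ) + L1)*L2 + ((b:ℂ) + (a:ℂ)*L1 + L1^2) = 0 := by
    have := hL2
    simp [Polynomial.IsRoot] at this
    linear_combination this
  refine ⟨L1, L2, -(a:ℂ) - L1 - L2, by ring, by linear_combination -e2,
    by linear_combination -L1*e2 + e1, e1, by linear_combination (L2 - L1) * e2 + e1, ?_⟩
  linear_combination ((-(a:ℂ) - L1 - L2) - L1) * e2 + e1


lemma system3_tendsto (A00 A01 A02 A10 A11 A12 A20 A21 A22 : ℂ) (a b c : ℝ)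
    (ha : 0 < a) (hb : 0 < b) (hc : 0 < c) (hab : c < a*b)
    (htr : A00 + A11 + A22 = -(a:ℂ))
    (he2 : A00*A11 - A01*A10 + A00*A22 - A02*A20 + A11*A22 - A12*A21 = (b:ℂ))
    (hdet : A00*(A11*A22 - A12*A21) - A01*(A10*A22 - A12*A20)
      + A02*(A10*A21 - A11*A20) = -(c:ℂ))
    (v1 v2 v3 : ℝ → ℂ)
    (hv1 : ∀ t, 0 ≤ t → HasDerivAt v1 (A00*v1 t + A01*v2 t + A02*v3 t) t)
    (hv2 : ∀ t, 0 ≤ t → HasDerivAt v2 (A10*v1 t + A11*v2 t + A12*v3 t) t)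
    (hv3 : ∀ t, 0 ≤ t → HasDerivAt v3 (A20*v1 t + A21*v2 t + A22*v3 t) t) :
    Tendsto v1 atTop (nhds 0) ∧ Tendsto v2 atTop (nhds 0) ∧ Tendsto v3 atTop (nhds 0) := by
  obtain ⟨L1, L2, L3, hVi1, hVi2, hVi3, hr1, hr2, hr3⟩ := cubic_roots a b c
  have hRe1 : L1.re < 0 := cubic_re_neg a b c ha hb hc hab L1 hr1
  have hRe2 : L2.re < 0 := cubic_re_neg a b c ha hb hc hab L2 hr2
  have hRe3 : L3.re < 0 := cubic_re_neg a b c ha hb hc hab L3 hr3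
  have hS1 : L1 + L2 + L3 = A00 + A11 + A22 := by rw [hVi1, htr]
  have hS2 : L1*L2 + L1*L3 + L2*L3
      = A00*A11 - A01*A10 + A00*A22 - A02*A20 + A11*A22 - A12*A21 := by rw [hVi2, he2]
  have hS3 : L1*L2*L3 = A00*(A11*A22 - A12*A21) - A01*(A10*A22 - A12*A20)
      + A02*(A10*A21 - A11*A20) := by rw [hVi3, hdet]
  set w1 : ℝ → ℂ := fun t => (A00*(v1 t) + A01*(v2 t) + A02*(v3 t)) - L1 * v1 t with hw1d
  set w2 : ℝ → ℂ := fun t => (A10*(v1 t) + A11*(v2 t) + A12*(v3 t)) - L1 * v2 t with hw2d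
  set w3 : ℝ → ℂ := fun t => (A20*(v1 t) + A21*(v2 t) + A22*(v3 t)) - L1 * v3 t with hw3d
  set u1 : ℝ → ℂ := fun t => A00*w1 t + A01*w2 t + A02*w3 t - L2 * w1 t with hu1d
  set u2 : ℝ → ℂ := fun t => A10*w1 t + A11*w2 t + A12*w3 t - L2 * w2 t with hu2d
  set u3 : ℝ → ℂ := fun t => A20*w1 t + A21*w2 t + A22*w3 t - L2 * w3 t with hu3d
  have hcv1 : ContinuousOn v1 (Set.Ici 0) := fun t ht => ((hv1 t ht).continuousAt).continuousWithinAt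
  have hcv2 : ContinuousOn v2 (Set.Ici 0) := fun t ht => ((hv2 t ht).continuousAt).continuousWithinAt
  have hcv3 : ContinuousOn v3 (Set.Ici 0) := fun t ht => ((hv3 t ht).continuousAt).continuousWithinAt
  have hcw1 : ContinuousOn w1 (Set.Ici 0) := by
    simp only [hw1d]
    exact (((continuousOn_const.mul hcv1).add (continuousOn_const.mul hcv2)).add
      (continuousOn_const.mul hcv3)).sub (continuousOn_const.mul hcv1)
  have hcw2 : ContinuousOn w2 (Set.Ici 0) := by
    simp only [hw2d]
    exact (((continuousOn_const.mul hcv1).add (continuousOn_const.mul hcv2)).add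
      (continuousOn_const.mul hcv3)).sub (continuousOn_const.mul hcv2)
  have hcw3 : ContinuousOn w3 (Set.Ici 0) := by
    simp only [hw3d]
    exact (((continuousOn_const.mul hcv1).add (continuousOn_const.mul hcv2)).add
      (continuousOn_const.mul hcv3)).sub (continuousOn_const.mul hcv3)
  have hcu1 : ContinuousOn u1 (Set.Ici 0) := by
    simp only [hu1d]
    exact (((continuousOn_const.mul hcw1).add (continuousOn_const.mul hcw2)).add
      (continuousOn_const.mul hcw3)).sub (continuousOn_const.mul hcw1)
  have hcu2 : ContinuousOn u2 (Set.Ici 0) := by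
    simp only [hu2d]
    exact (((continuousOn_const.mul hcw1).add (continuousOn_const.mul hcw2)).add
      (continuousOn_const.mul hcw3)).sub (continuousOn_const.mul hcw2)
  have hcu3 : ContinuousOn u3 (Set.Ici 0) := by
    simp only [hu3d]
    exact (((continuousOn_const.mul hcw1).add (continuousOn_const.mul hcw2)).add
      (continuousOn_const.mul hcw3)).sub (continuousOn_const.mul hcw3)
  -- derivatives of w
  have hw1 : ∀ t, 0 ≤ t → HasDerivAt w1 (A00*w1 t + A01*w2 t + A02*w3 t) t := by
    intro t ht
    have h := ((((hv1 t ht).const_mul A00).add ((hv2 t ht).const_mul A01)).add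
      ((hv3 t ht).const_mul A02)).sub ((hv1 t ht).const_mul L1)
    rw [hw1d]
    refine h.congr_deriv (Eq.symm ?_)
    simp only [hw1d, hw2d, hw3d]
    ring
  have hw2 : ∀ t, 0 ≤ t → HasDerivAt w2 (A10*w1 t + A11*w2 t + A12*w3 t) t := by
    intro t ht
    have h := ((((hv1 t ht).const_mul A10).add ((hv2 t ht).const_mul A11)).add
      ((hv3 t ht).const_mul A12)).sub ((hv2 t ht).const_mul L1)
    rw [hw2d]
    refine h.congr_deriv (Eq.symm ?_)
    simp only [hw1d, hw2d, hw3d]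
    ring
  have hw3 : ∀ t, 0 ≤ t → HasDerivAt w3 (A20*w1 t + A21*w2 t + A22*w3 t) t := by
    intro t ht
    have h := ((((hv1 t ht).const_mul A20).add ((hv2 t ht).const_mul A21)).add
      ((hv3 t ht).const_mul A22)).sub ((hv3 t ht).const_mul L1)
    rw [hw3d]
    refine h.congr_deriv (Eq.symm ?_)
    simp only [hw1d, hw2d, hw3d]
    ring
  -- derivatives of u, with the Cayley–Hamilton closure
  have hu1 : ∀ t, 0 ≤ t → HasDerivAt u1 (L3 * u1 t + 0) t := by
    intro t ht
    have h := ((((hw1 t ht).const_mul A00).add ((hw2 t ht).const_mul A01)).add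
      ((hw3 t ht).const_mul A02)).sub ((hw1 t ht).const_mul L2)
    rw [hu1d]
    refine h.congr_deriv (Eq.symm ?_)
    simp only [hu1d, hu2d, hu3d, hw1d, hw2d, hw3d]
    linear_combination ((A00*(A00*(v1 t) + A01*(v2 t) + A02*(v3 t)) + A01*(A10*(v1 t) + A11*(v2 t) + A12*(v3 t)) + A02*(A20*(v1 t) + A21*(v2 t) + A22*(v3 t)))) * hS1 - ((A00*(v1 t) + A01*(v2 t) + A02*(v3 t))) * hS2 + (v1 t) * hS3
  have hu2 : ∀ t, 0 ≤ t → HasDerivAt u2 (L3 * u2 t + 0) t := by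
    intro t ht
    have h := ((((hw1 t ht).const_mul A10).add ((hw2 t ht).const_mul A11)).add
      ((hw3 t ht).const_mul A12)).sub ((hw2 t ht).const_mul L2)
    rw [hu2d]
    refine h.congr_deriv (Eq.symm ?_)
    simp only [hu1d, hu2d, hu3d, hw1d, hw2d, hw3d]
    linear_combination ((A10*(A00*(v1 t) + A01*(v2 t) + A02*(v3 t)) + A11*(A10*(v1 t) + A11*(v2 t) + A12*(v3 t)) + A12*(A20*(v1 t) + A21*(v2 t) + A22*(v3 t)))) * hS1 - ((A10*(v1 t) + A11*(v2 t) + A12*(v3 t))) * hS2 + (v2 t) * hS3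
  have hu3 : ∀ t, 0 ≤ t → HasDerivAt u3 (L3 * u3 t + 0) t := by
    intro t ht
    have h := ((((hw1 t ht).const_mul A20).add ((hw2 t ht).const_mul A21)).add
      ((hw3 t ht).const_mul A22)).sub ((hw3 t ht).const_mul L2)
    rw [hu3d]
    refine h.congr_deriv (Eq.symm ?_)
    simp only [hu1d, hu2d, hu3d, hw1d, hw2d, hw3d]
    linear_combination ((A20*(A00*(v1 t) + A01*(v2 t) + A02*(v3 t)) + A21*(A10*(v1 t) + A11*(v2 t) + A12*(v3 t)) + A22*(A20*(v1 t) + A21*(v2 t) + A22*(v3 t)))) * hS1 - ((A20*(v1 t) + A21*(v2 t) + A22*(v3 t))) * hS2 + (v3 t) * hS3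
  have htu1 : Tendsto u1 atTop (nhds 0) :=
    decay_lemma L3 hRe3 u1 (fun _ => 0) hu1 continuousOn_const tendsto_const_nhds
  have htu2 : Tendsto u2 atTop (nhds 0) :=
    decay_lemma L3 hRe3 u2 (fun _ => 0) hu2 continuousOn_const tendsto_const_nhds
  have htu3 : Tendsto u3 atTop (nhds 0) :=
    decay_lemma L3 hRe3 u3 (fun _ => 0) hu3 continuousOn_const tendsto_const_nhds
  have hw1' : ∀ t, 0 ≤ t → HasDerivAt w1 (L2 * w1 t + u1 t) t := by
    intro t ht
    convert hw1 t ht using 1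
    simp only [hu1d]
    ring
  have hw2' : ∀ t, 0 ≤ t → HasDerivAt w2 (L2 * w2 t + u2 t) t := by
    intro t ht
    convert hw2 t ht using 1
    simp only [hu2d]
    ring
  have hw3' : ∀ t, 0 ≤ t → HasDerivAt w3 (L2 * w3 t + u3 t) t := by
    intro t ht
    convert hw3 t ht using 1
    simp only [hu3d]
    ring
  have htw1 : Tendsto w1 atTop (nhds 0) := decay_lemma L2 hRe2 w1 u1 hw1' hcu1 htu1
  have htw2 : Tendsto w2 atTop (nhds 0) := decay_lemma L2 hRe2 w2 u2 hw2' hcu2 htu2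
  have htw3 : Tendsto w3 atTop (nhds 0) := decay_lemma L2 hRe2 w3 u3 hw3' hcu3 htu3
  have hv1' : ∀ t, 0 ≤ t → HasDerivAt v1 (L1 * v1 t + w1 t) t := by
    intro t ht
    convert hv1 t ht using 1
    simp only [hw1d]
    ring
  have hv2' : ∀ t, 0 ≤ t → HasDerivAt v2 (L1 * v2 t + w2 t) t := by
    intro t ht
    convert hv2 t ht using 1
    simp only [hw2d]
    ring
  have hv3' : ∀ t, 0 ≤ t → HasDerivAt v3 (L1 * v3 t + w3 t) t := by
    intro t ht
    convert hv3 t ht using 1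
    simp only [hw3d]
    ring
  exact ⟨decay_lemma L1 hRe1 v1 w1 hv1' hcw1 htw1,
    decay_lemma L1 hRe1 v2 w2 hv2' hcw2 htw2,
    decay_lemma L1 hRe1 v3 w3 hv3' hcw3 htw3⟩

lemma entry_hasDerivAt {f : ℝ → Matrix (Fin 2) (Fin 2) ℂ} {A : Matrix (Fin 2) (Fin 2) ℂ} {t : ℝ}
    (h : HasDerivAt f A t) (i j : Fin 2) : HasDerivAt (fun s => f s i j) (A i j) t := by
  have := (((ContinuousLinearMap.proj (R := ℝ) (φ := fun _ : Fin 2 => ℂ) j).comp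
    (ContinuousLinearMap.proj (R := ℝ) (φ := fun _ : Fin 2 => Fin 2 → ℂ) i)).hasFDerivAt.comp_hasDerivAt t h)
  exact this

section Kentries
variable (γ₀ γ₁ γ₂ κ ω₁ ω₂ : ℝ) (M N : Matrix (Fin 2) (Fin 2) ℂ)

lemma K1_00 : K1 γ₀ γ₁ γ₂ κ ω₁ M N 0 0
    = -((γ₀:ℂ)*(1+κ) + γ₁) * M 0 0 + (γ₂:ℂ) * N 1 1 := by
  simp [K1, σm, σp, σz, Pp, Pm, Matrix.mul_apply, Matrix.vecMul, dotProduct,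
    Matrix.vecHead, Matrix.vecTail, Fin.sum_univ_two]
  ring

lemma K1_11 : K1 γ₀ γ₁ γ₂ κ ω₁ M N 1 1
    = (γ₀:ℂ) * M 0 0 - (γ₀:ℂ)*κ * M 1 1 := by
  simp [K1, σm, σp, σz, Pp, Pm, Matrix.mul_apply, Matrix.vecMul, dotProduct,
    Matrix.vecHead, Matrix.vecTail, Fin.sum_univ_two]
  try ring

lemma K1_01 : K1 γ₀ γ₁ γ₂ κ ω₁ M N 0 1
    = (((-((γ₀+γ₁)/2 + γ₀*κ) : ℝ) : ℂ) - Complex.I*(ω₁:ℝ)) * M 0 1 := by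
  simp [K1, σm, σp, σz, Pp, Pm, Matrix.mul_apply, Matrix.vecMul, dotProduct,
    Matrix.vecHead, Matrix.vecTail, Fin.sum_univ_two]
  push_cast
  ring

lemma K1_10 : K1 γ₀ γ₁ γ₂ κ ω₁ M N 1 0
    = (((-((γ₀+γ₁)/2 + γ₀*κ) : ℝ) : ℂ) + Complex.I*(ω₁:ℝ)) * M 1 0 := by
  simp [K1, σm, σp, σz, Pp, Pm, Matrix.mul_apply, Matrix.vecMul, dotProduct,
    Matrix.vecHead, Matrix.vecTail, Fin.sum_univ_two]
  push_cast
  ring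

lemma K2_00 : K2 γ₀ γ₁ γ₂ κ ω₂ M N 0 0
    = (γ₀:ℂ)*κ * M 0 0 - (γ₀:ℂ) * N 0 0 := by
  simp [K2, σm, σp, σz, Pp, Pm, Matrix.mul_apply, Matrix.vecMul, dotProduct,
    Matrix.vecHead, Matrix.vecTail, Fin.sum_univ_two]
  ring

lemma K2_11 : K2 γ₀ γ₁ γ₂ κ ω₂ M N 1 1
    = (γ₀:ℂ) * N 0 0 + (γ₁:ℂ) * M 0 0 + (γ₀:ℂ)*κ * M 1 1 - (γ₂:ℂ) * N 1 1 := by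
  simp [K2, σm, σp, σz, Pp, Pm, Matrix.mul_apply, Matrix.vecMul, dotProduct,
    Matrix.vecHead, Matrix.vecTail, Fin.sum_univ_two]
  ring

lemma K2_01 : K2 γ₀ γ₁ γ₂ κ ω₂ M N 0 1
    = (((-((γ₀+γ₂)/2) : ℝ) : ℂ) - Complex.I*(ω₂:ℝ)) * N 0 1 + (γ₀:ℂ)*κ * M 0 1 := by
  simp [K2, σm, σp, σz, Pp, Pm, Matrix.mul_apply, Matrix.vecMul, dotProduct,
    Matrix.vecHead, Matrix.vecTail, Fin.sum_univ_two]
  push_cast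
  ring

lemma K2_10 : K2 γ₀ γ₁ γ₂ κ ω₂ M N 1 0
    = (((-((γ₀+γ₂)/2) : ℝ) : ℂ) + Complex.I*(ω₂:ℝ)) * N 1 0 + (γ₀:ℂ)*κ * M 1 0 := by
  simp [K2, σm, σp, σz, Pp, Pm, Matrix.mul_apply, Matrix.vecMul, dotProduct,
    Matrix.vecHead, Matrix.vecTail, Fin.sum_univ_two]
  push_cast
  ring

end Kentries

lemma re_neg_sub_I (x y : ℝ) (hx : x < 0) : (((x:ℝ):ℂ) - Complex.I*(y:ℝ)).re < 0 := by
  simp [Complex.sub_re, Complex.mul_re]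
  exact hx

lemma re_neg_add_I (x y : ℝ) (hx : x < 0) : (((x:ℝ):ℂ) + Complex.I*(y:ℝ)).re < 0 := by
  simp [Complex.add_re, Complex.mul_re]
  exact hx

end Aux

set_option maxHeartbeats 2000000 in
/-- The equilibrium of the two-level model is a global attractor: along any solution of the
Lindblad rate equation with positive semidefinite initial data of total trace `1`, one has
`η₁(t) → p(z₁⁺P₊ + z₁⁻P₋)` and `η₂(t) → (1−p)(z₂⁺P₊ + z₂⁻P₋)` as `t → ∞`. -/
theorem two_level_equilibrium_global_attractor (γ₀ γ₁ γ₂ κ ω₁ ω₂ : ℝ)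
    (hγ₀ : 0 < γ₀) (hγ₁ : 0 < γ₁) (hγ₂ : 0 < γ₂) (hκ : 0 < κ)
    (η₁ η₂ : ℝ → Matrix (Fin 2) (Fin 2) ℂ)
    (hd₁ : ∀ t : ℝ, 0 ≤ t → HasDerivAt η₁ (K1 γ₀ γ₁ γ₂ κ ω₁ (η₁ t) (η₂ t)) t)
    (hd₂ : ∀ t : ℝ, 0 ≤ t → HasDerivAt η₂ (K2 γ₀ γ₁ γ₂ κ ω₂ (η₁ t) (η₂ t)) t)
    (hpos₁ : (η₁ 0).PosSemidef) (hpos₂ : (η₂ 0).PosSemidef)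
    (htr : (η₁ 0).trace + (η₂ 0).trace = 1) :
    Filter.Tendsto η₁ Filter.atTop (nhds (η1eq γ₀ γ₁ γ₂ κ)) ∧
    Filter.Tendsto η₂ Filter.atTop (nhds (η2eq γ₀ γ₁ γ₂ κ)) := by
  -- basic positivity
  have hd1p : (0:ℝ) < 1 + κ := by linarith
  have hd2p : (0:ℝ) < γ₁ + γ₀ * (1 + κ) := by nlinarith
  have hDp : (0:ℝ) < γ₂ + κ * (γ₀ + γ₁ + γ₂) + κ ^ 2 * (γ₀ + γ₂) := by nlinarith
  have hk2 : κ₂ γ₀ γ₁ γ₂ κ = γ₂ * κ / (γ₁ + γ₀ * (1 + κ)) := rfl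
  have hk2pos : 0 < κ₂ γ₀ γ₁ γ₂ κ := by rw [hk2]; positivity
  have hd4p : (0:ℝ) < 1 + κ₂ γ₀ γ₁ γ₂ κ := by linarith
  set p := peq γ₀ γ₁ γ₂ κ with hp
  set z1 := z1p κ with hz1
  set z2 := z2p γ₀ γ₁ γ₂ κ with hz2
  have hd1n : (1 + κ) ≠ 0 := ne_of_gt hd1p
  have hd2n : (γ₁ + γ₀ * (1 + κ)) ≠ 0 := ne_of_gt hd2p
  have hDn : (γ₂ + κ * (γ₀ + γ₁ + γ₂) + κ ^ 2 * (γ₀ + γ₂)) ≠ 0 := ne_of_gt hDp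
  have hsn : (γ₁ + γ₀ * (1 + κ) + γ₂ * κ) ≠ 0 := by nlinarith
  have S2 : γ₀*(p*z1) - γ₀*κ*(p*(1-z1)) = 0 := by
    rw [hp, hz1, peq, z1p]
    field_simp
    ring
  have S3 : γ₀*κ*(p*z1) - γ₀*((1-p)*z2) = 0 := by
    rw [hp, hz1, hz2, peq, z1p, z2p, κ₂]
    field_simp
    ring
  have S1 : -(γ₀*(1+κ)+γ₁)*(p*z1) + γ₂*((1-p)*(1-z2)) = 0 := by
    rw [hp, hz1, hz2, peq, z1p, z2p, κ₂]
    field_simp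
    ring
  -- equilibrium constants (complex)
  set E1 : ℂ := ((p*z1 : ℝ) : ℂ) with hE1
  set E2 : ℂ := ((p*(1-z1) : ℝ) : ℂ) with hE2
  set E3 : ℂ := (((1-p)*z2 : ℝ) : ℂ) with hE3
  set E4 : ℂ := (((1-p)*(1-z2) : ℝ) : ℂ) with hE4
  have S1c : -((γ₀:ℂ)*(1+κ)+γ₁) * E1 + (γ₂:ℂ) * E4 = 0 := by
    rw [hE1, hE4]
    have := congrArg (Complex.ofReal) S1
    push_cast at this ⊢
    linear_combination this
  have S2c : (γ₀:ℂ) * E1 - (γ₀:ℂ)*κ * E2 = 0 := by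
    rw [hE1, hE2]
    have := congrArg (Complex.ofReal) S2
    push_cast at this ⊢
    linear_combination this
  have S3c : (γ₀:ℂ)*κ * E1 - (γ₀:ℂ) * E3 = 0 := by
    rw [hE1, hE3]
    have := congrArg (Complex.ofReal) S3
    push_cast at this ⊢
    linear_combination this
  have Ssumc : E1 + E2 + E3 + E4 = 1 := by
    rw [hE1, hE2, hE3, hE4]
    push_cast
    ring
  -- shifted diagonal functions
  set v1 : ℝ → ℂ := fun t => η₁ t 0 0 - E1 with hv1d
  set v2 : ℝ → ℂ := fun t => η₁ t 1 1 - E2 with hv2d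
  set v3 : ℝ → ℂ := fun t => η₂ t 0 0 - E3 with hv3d
  set v4 : ℝ → ℂ := fun t => η₂ t 1 1 - E4 with hv4d
  have hdv1 : ∀ t, 0 ≤ t → HasDerivAt v1 (K1 γ₀ γ₁ γ₂ κ ω₁ (η₁ t) (η₂ t) 0 0) t :=
    fun t ht => (entry_hasDerivAt (hd₁ t ht) 0 0).sub_const E1
  have hdv2 : ∀ t, 0 ≤ t → HasDerivAt v2 (K1 γ₀ γ₁ γ₂ κ ω₁ (η₁ t) (η₂ t) 1 1) t :=
    fun t ht => (entry_hasDerivAt (hd₁ t ht) 1 1).sub_const E2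
  have hdv3 : ∀ t, 0 ≤ t → HasDerivAt v3 (K2 γ₀ γ₁ γ₂ κ ω₂ (η₁ t) (η₂ t) 0 0) t :=
    fun t ht => (entry_hasDerivAt (hd₂ t ht) 0 0).sub_const E3
  have hdv4 : ∀ t, 0 ≤ t → HasDerivAt v4 (K2 γ₀ γ₁ γ₂ κ ω₂ (η₁ t) (η₂ t) 1 1) t :=
    fun t ht => (entry_hasDerivAt (hd₂ t ht) 1 1).sub_const E4
  -- the trace is conserved
  set sfun : ℝ → ℂ := fun t => v1 t + v2 t + v3 t + v4 t with hsd
  have hds : ∀ t, 0 ≤ t → HasDerivAt sfun 0 t := by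
    intro t ht
    have h := (((hdv1 t ht).add (hdv2 t ht)).add (hdv3 t ht)).add (hdv4 t ht)
    rw [hsd]
    refine h.congr_deriv (Eq.symm ?_)
    rw [K1_00, K1_11, K2_00, K2_11]
    ring
  have hs0 : sfun 0 = 0 := by
    rw [hsd]
    simp only [hv1d, hv2d, hv3d, hv4d]
    have h1 := htr
    rw [Matrix.trace_fin_two, Matrix.trace_fin_two] at h1
    linear_combination h1 - Ssumc
  have hs : ∀ t, 0 ≤ t → sfun t = 0 := by
    intro T hT
    have hcont : ContinuousOn sfun (Set.Icc 0 T) := fun x hx =>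
      ((hds x hx.1).continuousAt).continuousWithinAt
    have := constant_of_has_deriv_right_zero hcont
      (fun x hx => (hds x hx.1).hasDerivWithinAt) T ⟨hT, le_refl T⟩
    rw [this, hs0]
  -- reduced 3x3 system
  have hv1' : ∀ t, 0 ≤ t → HasDerivAt v1
      (-((γ₀:ℂ)*(1+κ)+γ₁+γ₂)*v1 t + (-(γ₂:ℂ))*v2 t + (-(γ₂:ℂ))*v3 t) t := by
    intro t ht
    have h := hdv1 t ht
    rw [K1_00] at h
    convert h using 1
    have h4 := hs t ht
    rw [hsd] at h4
    simp only [hv1d, hv2d, hv3d, hv4d] at h4 ⊢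
    linear_combination (-(γ₂:ℂ)) * h4 - S1c
  have hv2' : ∀ t, 0 ≤ t → HasDerivAt v2
      ((γ₀:ℂ)*v1 t + (-((γ₀:ℂ)*κ))*v2 t + (0:ℂ)*v3 t) t := by
    intro t ht
    have h := hdv2 t ht
    rw [K1_11] at h
    convert h using 1
    simp only [hv1d, hv2d, hv3d, hv4d]
    linear_combination -S2c
  have hv3' : ∀ t, 0 ≤ t → HasDerivAt v3
      ((γ₀:ℂ)*κ*v1 t + (0:ℂ)*v2 t + (-(γ₀:ℂ))*v3 t) t := by
    intro t ht
    have h := hdv3 t ht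
    rw [K2_00] at h
    convert h using 1
    simp only [hv1d, hv2d, hv3d, hv4d]
    linear_combination -S3c
  -- Hurwitz data
  have ha : (0:ℝ) < 2*γ₀*(1+κ)+γ₁+γ₂ := by nlinarith
  have hb : (0:ℝ) < 2*γ₀*γ₂*(1+κ)+γ₀*γ₁*(1+κ)+γ₀^2*(1+3*κ+κ^2) := by
    nlinarith [mul_pos (mul_pos hγ₀ hγ₂) hd1p, mul_pos (mul_pos hγ₀ hγ₁) hd1p,
      mul_pos hγ₀ hγ₀, mul_pos (mul_pos hγ₀ hγ₀) hκ,
      mul_pos (mul_pos (mul_pos hγ₀ hγ₀) hκ) hκ]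
  have hc : (0:ℝ) < γ₀^2*γ₂*(1+κ+κ^2)+γ₀^2*γ₁*κ+γ₀^3*κ*(1+κ) := by
    nlinarith [mul_pos (mul_pos hγ₀ hγ₀) hγ₂,
      mul_pos (mul_pos (mul_pos hγ₀ hγ₀) hγ₂) hκ,
      mul_pos (mul_pos (mul_pos (mul_pos hγ₀ hγ₀) hγ₂) hκ) hκ,
      mul_pos (mul_pos (mul_pos hγ₀ hγ₀) hγ₁) hκ,
      mul_pos (mul_pos (mul_pos hγ₀ hγ₀) hγ₀) hκ,
      mul_pos (mul_pos (mul_pos (mul_pos hγ₀ hγ₀) hγ₀) hκ) hκ]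
  have hab : γ₀^2*γ₂*(1+κ+κ^2)+γ₀^2*γ₁*κ+γ₀^3*κ*(1+κ)
      < (2*γ₀*(1+κ)+γ₁+γ₂) * (2*γ₀*γ₂*(1+κ)+γ₀*γ₁*(1+κ)+γ₀^2*(1+3*κ+κ^2)) := by
    have hid : (2*γ₀*(1+κ)+γ₁+γ₂) * (2*γ₀*γ₂*(1+κ)+γ₀*γ₁*(1+κ)+γ₀^2*(1+3*κ+κ^2))
        - (γ₀^2*γ₂*(1+κ+κ^2)+γ₀^2*γ₁*κ+γ₀^3*κ*(1+κ))
        = 2*(γ₀*(γ₂*γ₂)) + 2*(γ₀*(γ₂*γ₂)*κ) + 3*(γ₀*γ₁*γ₂) + 3*(γ₀*γ₁*γ₂*κ)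
          + (γ₀*(γ₁*γ₁)) + (γ₀*(γ₁*γ₁)*κ) + 4*(γ₀*γ₀*γ₂) + 10*(γ₀*γ₀*γ₂*κ)
          + 4*(γ₀*γ₀*γ₂*κ*κ) + 3*(γ₀*γ₀*γ₁) + 6*(γ₀*γ₀*γ₁*κ) + 3*(γ₀*γ₀*γ₁*κ*κ)
          + 2*(γ₀*γ₀*γ₀) + 7*(γ₀*γ₀*γ₀*κ) + 7*(γ₀*γ₀*γ₀*κ*κ) + 2*(γ₀*γ₀*γ₀*κ*κ*κ) := by
      ring
    nlinarith [mul_pos hγ₀ (mul_pos hγ₂ hγ₂), mul_pos (mul_pos hγ₀ (mul_pos hγ₂ hγ₂)) hκ,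
      mul_pos (mul_pos hγ₀ hγ₁) hγ₂, mul_pos (mul_pos (mul_pos hγ₀ hγ₁) hγ₂) hκ,
      mul_pos hγ₀ (mul_pos hγ₁ hγ₁), mul_pos (mul_pos hγ₀ (mul_pos hγ₁ hγ₁)) hκ,
      mul_pos (mul_pos hγ₀ hγ₀) hγ₂, mul_pos (mul_pos (mul_pos hγ₀ hγ₀) hγ₂) hκ,
      mul_pos (mul_pos (mul_pos (mul_pos hγ₀ hγ₀) hγ₂) hκ) hκ,
      mul_pos (mul_pos hγ₀ hγ₀) hγ₁, mul_pos (mul_pos (mul_pos hγ₀ hγ₀) hγ₁) hκ,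
      mul_pos (mul_pos (mul_pos (mul_pos hγ₀ hγ₀) hγ₁) hκ) hκ,
      mul_pos (mul_pos hγ₀ hγ₀) hγ₀, mul_pos (mul_pos (mul_pos hγ₀ hγ₀) hγ₀) hκ,
      mul_pos (mul_pos (mul_pos (mul_pos hγ₀ hγ₀) hγ₀) hκ) hκ,
      mul_pos (mul_pos (mul_pos (mul_pos (mul_pos hγ₀ hγ₀) hγ₀) hκ) hκ) hκ]
  obtain ⟨htv1, htv2, htv3⟩ := system3_tendsto
    (-((γ₀:ℂ)*(1+κ)+γ₁+γ₂)) (-(γ₂:ℂ)) (-(γ₂:ℂ))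
    ((γ₀:ℂ)) (-((γ₀:ℂ)*κ)) (0:ℂ)
    ((γ₀:ℂ)*κ) (0:ℂ) (-(γ₀:ℂ))
    (2*γ₀*(1+κ)+γ₁+γ₂)
    (2*γ₀*γ₂*(1+κ)+γ₀*γ₁*(1+κ)+γ₀^2*(1+3*κ+κ^2))
    (γ₀^2*γ₂*(1+κ+κ^2)+γ₀^2*γ₁*κ+γ₀^3*κ*(1+κ))
    ha hb hc hab
    (by push_cast; ring) (by push_cast; ring) (by push_cast; ring)
    v1 v2 v3 hv1' hv2' hv3'
  have htv4 : Filter.Tendsto v4 Filter.atTop (nhds 0) := by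
    have h := ((htv1.add htv2).add htv3).neg
    rw [show -((0:ℂ)+0+0) = 0 by ring] at h
    apply h.congr'
    filter_upwards [Filter.eventually_ge_atTop (0:ℝ)] with t ht
    have h4 := hs t ht
    rw [hsd] at h4
    linear_combination -h4
  -- off-diagonal entries
  set bo1 : ℝ → ℂ := fun t => η₁ t 0 1 with hbo1d
  set co1 : ℝ → ℂ := fun t => η₁ t 1 0 with hco1d
  set bo2 : ℝ → ℂ := fun t => η₂ t 0 1 with hbo2d
  set co2 : ℝ → ℂ := fun t => η₂ t 1 0 with hco2d
  have hxo1 : -((γ₀+γ₁)/2 + γ₀*κ) < 0 := by nlinarith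
  have hxo2 : -((γ₀+γ₂)/2) < 0 := by nlinarith
  have hdb1 : ∀ t, 0 ≤ t → HasDerivAt bo1
      ((((-((γ₀+γ₁)/2 + γ₀*κ) : ℝ):ℂ) - Complex.I*(ω₁:ℝ)) * bo1 t + (fun _ : ℝ => (0:ℂ)) t) t := by
    intro t ht
    have h := entry_hasDerivAt (hd₁ t ht) 0 1
    rw [K1_01] at h
    rw [hbo1d]
    convert h using 1
    ring
  have hdc1 : ∀ t, 0 ≤ t → HasDerivAt co1
      ((((-((γ₀+γ₁)/2 + γ₀*κ) : ℝ):ℂ) + Complex.I*(ω₁:ℝ)) * co1 t + (fun _ : ℝ => (0:ℂ)) t) t := by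
    intro t ht
    have h := entry_hasDerivAt (hd₁ t ht) 1 0
    rw [K1_10] at h
    rw [hco1d]
    convert h using 1
    ring
  have htb1 : Filter.Tendsto bo1 Filter.atTop (nhds 0) :=
    decay_lemma _ (re_neg_sub_I _ ω₁ hxo1) bo1 _ hdb1 continuousOn_const tendsto_const_nhds
  have htc1 : Filter.Tendsto co1 Filter.atTop (nhds 0) :=
    decay_lemma _ (re_neg_add_I _ ω₁ hxo1) co1 _ hdc1 continuousOn_const tendsto_const_nhds
  have hcb1 : ContinuousOn bo1 (Set.Ici 0) := fun t ht =>
    ((hdb1 t ht).continuousAt).continuousWithinAt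
  have hcc1 : ContinuousOn co1 (Set.Ici 0) := fun t ht =>
    ((hdc1 t ht).continuousAt).continuousWithinAt
  have hdb2 : ∀ t, 0 ≤ t → HasDerivAt bo2
      ((((-((γ₀+γ₂)/2) : ℝ):ℂ) - Complex.I*(ω₂:ℝ)) * bo2 t
        + (fun s : ℝ => (γ₀:ℂ)*κ * bo1 s) t) t := by
    intro t ht
    have h := entry_hasDerivAt (hd₂ t ht) 0 1
    rw [K2_01] at h
    rw [hbo2d]
    convert h using 1
    try simp only [hbo1d]
    try ring
  have hdc2 : ∀ t, 0 ≤ t → HasDerivAt co2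
      ((((-((γ₀+γ₂)/2) : ℝ):ℂ) + Complex.I*(ω₂:ℝ)) * co2 t
        + (fun s : ℝ => (γ₀:ℂ)*κ * co1 s) t) t := by
    intro t ht
    have h := entry_hasDerivAt (hd₂ t ht) 1 0
    rw [K2_10] at h
    rw [hco2d]
    convert h using 1
    try simp only [hco1d]
    try ring
  have htb2 : Filter.Tendsto bo2 Filter.atTop (nhds 0) := by
    refine decay_lemma _ (re_neg_sub_I _ ω₂ hxo2) bo2 _ hdb2
      (continuousOn_const.mul hcb1) ?_
    have := htb1.const_mul ((γ₀:ℂ)*κ)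
    simpa using this
  have htc2 : Filter.Tendsto co2 Filter.atTop (nhds 0) := by
    refine decay_lemma _ (re_neg_add_I _ ω₂ hxo2) co2 _ hdc2
      (continuousOn_const.mul hcc1) ?_
    have := htc1.const_mul ((γ₀:ℂ)*κ)
    simpa using this
  -- entrywise limits for η₁
  have ht100 : Filter.Tendsto (fun t => η₁ t 0 0) Filter.atTop (nhds E1) := by
    have h := htv1.add (tendsto_const_nhds (x := E1))
    rw [zero_add] at h
    apply h.congr
    intro t
    simp only [hv1d]
    ring
  have ht111 : Filter.Tendsto (fun t => η₁ t 1 1) Filter.atTop (nhds E2) := by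
    have h := htv2.add (tendsto_const_nhds (x := E2))
    rw [zero_add] at h
    apply h.congr
    intro t
    simp only [hv2d]
    ring
  have ht200 : Filter.Tendsto (fun t => η₂ t 0 0) Filter.atTop (nhds E3) := by
    have h := htv3.add (tendsto_const_nhds (x := E3))
    rw [zero_add] at h
    apply h.congr
    intro t
    simp only [hv3d]
    ring
  have ht211 : Filter.Tendsto (fun t => η₂ t 1 1) Filter.atTop (nhds E4) := by
    have h := htv4.add (tendsto_const_nhds (x := E4))
    rw [zero_add] at h
    apply h.congr
    intro t
    simp only [hv4d]
    ring
  constructor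
  · apply tendsto_pi_nhds.mpr
    intro i
    apply tendsto_pi_nhds.mpr
    intro j
    fin_cases i <;> fin_cases j
    · have he : η1eq γ₀ γ₁ γ₂ κ 0 0 = E1 := by
        rw [hE1]; simp [η1eq, Pp, Pm, hp, hz1]
      exact he ▸ ht100
    · have he : η1eq γ₀ γ₁ γ₂ κ 0 1 = 0 := by simp [η1eq, Pp, Pm]
      exact he ▸ htb1
    · have he : η1eq γ₀ γ₁ γ₂ κ 1 0 = 0 := by simp [η1eq, Pp, Pm]
      exact he ▸ htc1
    · have he : η1eq γ₀ γ₁ γ₂ κ 1 1 = E2 := by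
        rw [hE2]; simp [η1eq, Pp, Pm, hp, hz1]; try push_cast
        try ring
      exact he ▸ ht111
  · apply tendsto_pi_nhds.mpr
    intro i
    apply tendsto_pi_nhds.mpr
    intro j
    fin_cases i <;> fin_cases j
    · have he : η2eq γ₀ γ₁ γ₂ κ 0 0 = E3 := by
        rw [hE3]; simp [η2eq, Pp, Pm, hp, hz2]; try push_cast
        try ring
      exact he ▸ ht200
    · have he : η2eq γ₀ γ₁ γ₂ κ 0 1 = 0 := by simp [η2eq, Pp, Pm]
      exact he ▸ htb2
    · have he : η2eq γ₀ γ₁ γ₂ κ 1 0 = 0 := by simp [η2eq, Pp, Pm]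
      exact he ▸ htc2
    · have he : η2eq γ₀ γ₁ γ₂ κ 1 1 = E4 := by
        rw [hE4]; simp [η2eq, Pp, Pm, hp, hz2]; try push_cast
        try ring
      exact he ▸ ht211
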